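/- Let X be a Banach space of functions on ℝ in which the Schwartz space S(ℝ) embeds continuously and densely, and suppose that every α ∈ X* whose distributional Fourier transform is supported in ℤ is zero. Then the image under the Fourier transform of the space I_0(ℝ) (Schwartz functions vanishing to infinite order at all integers) is dense in X. -/

import Mathlib

/-- A tempered distribution `α` vanishes on an open set `U` if it kills every Schwartz
function whose (closed) support is contained in `U`. -/
def DistVanishesOn (α : SchwartzMap ℝ ℂ →L[ℂ] ℂ) (U : Set ℝ) : Prop :=
  ∀ φ : SchwartzMap ℝ ℂ, tsupport (φ : ℝ → ℂ) ⊆ U → α φ = 0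

/-- The support of a tempered distribution. -/
def DistSupport (α : SchwartzMap ℝ ℂ →L[ℂ] ℂ) : Set ℝ :=
  {x : ℝ | ∀ U : Set ℝ, IsOpen U → x ∈ U → ¬ DistVanishesOn α U}

/-- The space `I₀(ℝ)` of Schwartz functions vanishing to infinite order at every integer. -/
def I0 : Set (SchwartzMap ℝ ℂ) :=
  {f : SchwartzMap ℝ ℂ | ∀ (n : ℤ) (j : ℕ), iteratedDeriv j (f : ℝ → ℂ) (n : ℝ) = 0}

/-- A subspace on which every continuous linear functional that annihilates it vanishes
is dense.  (Hahn–Banach.) -/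
lemma dense_of_forall_dual_eq_zero
    (X : Type*) [NormedAddCommGroup X] [NormedSpace ℂ X]
    (M : Submodule ℂ X)
    (h : ∀ α : X →L[ℂ] ℂ, (∀ x ∈ M, α x = 0) → α = 0) :
    Dense (M : Set X) := by
  rw [dense_iff_closure_eq]
  by_contra hne
  obtain ⟨x, hx⟩ : ∃ x : X, x ∉ closure (M : Set X) := by
    by_contra h'
    push_neg at h'
    exact hne (Set.eq_univ_of_forall h')
  have hconv : Convex ℝ (closure (M : Set X)) := by
    have hMc : Convex ℝ (M : Set X) := by
      intro a ha b hb s t hs ht hst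
      have := M.add_mem (M.smul_mem (s : ℂ) ha) (M.smul_mem (t : ℂ) hb)
      simpa [Complex.coe_smul] using this
    exact hMc.closure
  obtain ⟨f, u, hfu, hux⟩ :=
    RCLike.geometric_hahn_banach_closed_point (𝕜 := ℂ) hconv isClosed_closure hx
  have hf0 : ∀ y ∈ M, f y = 0 := by
    intro y hy
    by_contra hfy
    have hmem : ∀ c : ℂ, c • y ∈ closure (M : Set X) :=
      fun c => subset_closure (M.smul_mem c hy)
    have := hfu _ (hmem ((u + 1 : ℝ) * (f y)⁻¹))
    rw [map_smul, smul_eq_mul, mul_assoc, inv_mul_cancel₀ hfy, mul_one] at this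
    simp at this
    linarith
  have : f = 0 := h f hf0
  rw [this] at hux
  simp at hux
  have h0 : (0 : X) ∈ closure (M : Set X) := subset_closure M.zero_mem
  have := hfu 0 h0
  simp at this
  linarith

/-- Let `X` be a Banach space in which the Schwartz space embeds continuously, densely
and injectively via `j`. If every `α ∈ X*` whose distributional Fourier transform is
supported in `ℤ` vanishes, then the image under the Fourier transform of `I₀(ℝ)` is
dense in `X`. -/
theorem fourier_I0_dense
    (X : Type*) [NormedAddCommGroup X] [NormedSpace ℂ X] [CompleteSpace X]
    (j : SchwartzMap ℝ ℂ →L[ℂ] X) (hinj : Function.Injective j) (hdense : DenseRange j)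
    (hX : ∀ α : X →L[ℂ] ℂ,
      DistSupport ((α.comp j).comp
          (SchwartzMap.fourierTransformCLM ℂ : SchwartzMap ℝ ℂ →L[ℂ] SchwartzMap ℝ ℂ)) ⊆
        Set.range (Int.cast : ℤ → ℝ) → α = 0) :
    Dense (⇑j '' (⇑(SchwartzMap.fourierTransformCLM ℂ : SchwartzMap ℝ ℂ →L[ℂ] SchwartzMap ℝ ℂ)
      '' I0)) := by
  set F := (SchwartzMap.fourierTransformCLM ℂ : SchwartzMap ℝ ℂ →L[ℂ] SchwartzMap ℝ ℂ) with hF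
  -- I0 is closed under the module operations, so the image is a submodule.
  have hI0_zero : (0 : SchwartzMap ℝ ℂ) ∈ I0 := by
    intro n k
    have : ((0 : SchwartzMap ℝ ℂ) : ℝ → ℂ) = (0 : ℝ → ℂ) := rfl
    rw [this, iteratedDeriv_eq_iteratedFDeriv]
    rw [show (0 : ℝ → ℂ) = (fun _ : ℝ => (0 : ℂ)) from rfl, iteratedFDeriv_zero_fun]
    simp
  have hI0_add : ∀ f g : SchwartzMap ℝ ℂ, f ∈ I0 → g ∈ I0 → f + g ∈ I0 := by
    intro f g hf hg n k
    have : ((f + g : SchwartzMap ℝ ℂ) : ℝ → ℂ) = (f : ℝ → ℂ) + (g : ℝ → ℂ) := rfl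
    rw [this, iteratedDeriv_eq_iteratedFDeriv,
      iteratedFDeriv_add_apply (f.smooth k).contDiffAt (g.smooth k).contDiffAt]
    have hf' := hf n k
    have hg' := hg n k
    rw [iteratedDeriv_eq_iteratedFDeriv] at hf' hg'
    simp [hf', hg']
  have hI0_smul : ∀ (c : ℂ) (f : SchwartzMap ℝ ℂ), f ∈ I0 → c • f ∈ I0 := by
    intro c f hf n k
    have : ((c • f : SchwartzMap ℝ ℂ) : ℝ → ℂ) = c • (f : ℝ → ℂ) := rfl
    rw [this, iteratedDeriv_eq_iteratedFDeriv, iteratedFDeriv_const_smul_apply (f.smooth k).contDiffAt]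
    have hf' := hf n k
    rw [iteratedDeriv_eq_iteratedFDeriv] at hf'
    simp [hf']
  let M : Submodule ℂ X :=
    { carrier := ⇑j '' (⇑F '' I0)
      zero_mem' := ⟨F 0, ⟨0, hI0_zero, rfl⟩, by simp⟩
      add_mem' := by
        rintro a b ⟨-, ⟨f, hf, rfl⟩, rfl⟩ ⟨-, ⟨g, hg, rfl⟩, rfl⟩
        exact ⟨F (f + g), ⟨f + g, hI0_add f g hf hg, rfl⟩, by simp⟩
      smul_mem' := by
        rintro c a ⟨-, ⟨f, hf, rfl⟩, rfl⟩
        exact ⟨F (c • f), ⟨c • f, hI0_smul c f hf, rfl⟩, by simp⟩ }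
  have : Dense (M : Set X) := by
    apply dense_of_forall_dual_eq_zero
    intro α hα
    apply hX
    intro x hx
    by_contra hxZ
    refine hx (Set.range (Int.cast : ℤ → ℝ))ᶜ
      (Int.isClosedEmbedding_coe_real.isClosed_range.isOpen_compl)
      hxZ ?_
    intro φ hφ
    have hφI0 : φ ∈ I0 := by
      intro n k
      have hn : (n : ℝ) ∉ tsupport (φ : ℝ → ℂ) := by
        intro hmem
        exact hφ hmem ⟨n, rfl⟩
      have hev : (φ : ℝ → ℂ) =ᶠ[nhds (n : ℝ)] (0 : ℝ → ℂ) := by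
        have : IsOpen (tsupport (φ : ℝ → ℂ))ᶜ := (isClosed_tsupport _).isOpen_compl
        filter_upwards [this.mem_nhds hn] with y hy
        exact image_eq_zero_of_notMem_tsupport hy
      rw [hev.iteratedDeriv_eq k, iteratedDeriv_eq_iteratedFDeriv]
      rw [show (0 : ℝ → ℂ) = (fun _ : ℝ => (0 : ℂ)) from rfl, iteratedFDeriv_zero_fun]
      simp
    have : j (F φ) ∈ M := ⟨F φ, ⟨φ, hφI0, rfl⟩, rfl⟩
    simpa using hα _ this
  exact this
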